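/- Let n ≥ 2, θ ∈ ℤ, and v_1, …, v_{n−1} ∈ ℤ. For 1 ≤ j ≤ n−1 define q_j = (v_j − θ) + 2·Σ_{l=1}^{n−1−j} (−1)^l (v_{j+l} − θ), and for 0 ≤ m ≤ n define the function 𝔓_m(u) = ∏_{l=1}^{m−1} (1 − ((m−l)/(2u))²)^{q_{n−l}} (an empty product, equal to 1, for m ≤ 1), where the powers are integer powers in ℂ. Then for every 1 ≤ i ≤ n−1 and every u ∈ ℂ such that 2u ∉ ℤ, one has: (1 − 1/(4u²))^{θ − v_i} · 𝔓_{n−i−1}(u) · 𝔓_{n−i+1}(u) / ( 𝔓_{n−i}(u − 1/2) · 𝔓_{n−i}(u + 1/2) ) = 1. -/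

import Mathlib

section aux

lemma my_base_ne (k : ℕ) (w : ℂ) (hw : ∀ z : ℤ, 2 * w ≠ (z : ℂ)) :
    (1 - ((k:ℂ) / (2*w)) ^ 2) ≠ 0 := by
  have h0 : (2*w) ≠ 0 := by simpa using hw 0
  intro h
  have hx : ((k:ℂ)/(2*w) - 1) * ((k:ℂ)/(2*w) + 1) = 0 := by linear_combination -h
  rcases mul_eq_zero.1 hx with h1 | h1
  · have h2 : (k:ℂ) = 2*w := by
      have := sub_eq_zero.mp h1
      rw [div_eq_one_iff_eq h0] at this
      linear_combination this
    exact hw k (by exact_mod_cast h2.symm)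
  · have h2 : (k:ℂ) = -(2*w) := by
      have h3 : (k:ℂ)/(2*w) = -1 := by linear_combination h1
      rw [div_eq_iff h0] at h3
      linear_combination h3
    apply hw (-k)
    push_cast
    linear_combination h2

lemma my_factor_id (k : ℕ) (u : ℂ) (h0 : 2*u ≠ 0) (hm : 2*u - 1 ≠ 0) (hp : 2*u + 1 ≠ 0) :
    (1 - (((k+1:ℕ):ℂ) / (2*(u - 1/2)))^2) * (1 - (((k+1:ℕ):ℂ) / (2*(u + 1/2)))^2)
      * (1 - 1/(4*u^2))^2
    = (1 - ((k:ℂ) / (2*u))^2) * (1 - (((k+2:ℕ):ℂ) / (2*u))^2) := by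
  push_cast
  have e1 : 2*(u - 1/2) = 2*u - 1 := by ring
  have e2 : 2*(u + 1/2) = 2*u + 1 := by ring
  have e3 : 4*u^2 = (2*u)^2 := by ring
  rw [e1, e2, e3]
  have hu0 : u ≠ 0 := by rintro rfl; simp at h0
  field_simp
  ring

lemma my_zpow_sum {a : ℂ} (ha : a ≠ 0) (s : Finset ℕ) (e : ℕ → ℤ) :
    a ^ (∑ l ∈ s, e l) = ∏ l ∈ s, a ^ (e l) := by
  classical
  induction s using Finset.induction_on with
  | empty => simp
  | insert _ _ h ih => rw [Finset.sum_insert h, Finset.prod_insert h, zpow_add₀ ha, ih]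

lemma my_sum_Icc_one {M : Type*} [AddCommMonoid M] (k : ℕ) (f : ℕ → M) :
    ∑ l ∈ Finset.Icc 1 k, f l = ∑ l ∈ Finset.range k, f (l+1) := by
  induction k with
  | zero => simp
  | succ k ih => rw [Finset.sum_Icc_succ_top (by omega), ih, Finset.sum_range_succ]

end aux

/-- The integers `q_j` of (5.5):
`q j = (v j - θ) + 2 ∑_{l=1}^{n-1-j} (-1)^l (v (j+l) - θ)`. -/
noncomputable def qcoef (n : ℕ) (θ : ℤ) (v : ℕ → ℤ) (j : ℕ) : ℤ :=
  (v j - θ) + 2 * ∑ l ∈ Finset.Icc 1 (n - 1 - j), (-1 : ℤ) ^ l * (v (j + l) - θ)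

/-- The correction factor (5.6): `𝔓_m(u) = ∏_{l=1}^{m-1} (1 - ((m-l)/(2u))²)^{q_{n-l}}`. -/
noncomputable def frakP (n : ℕ) (θ : ℤ) (v : ℕ → ℤ) (m : ℕ) (u : ℂ) : ℂ :=
  ∏ l ∈ Finset.Icc 1 (m - 1), (1 - (((m - l : ℕ) : ℂ) / (2 * u)) ^ 2) ^ (qcoef n θ v (n - l))

lemma my_qrec (n : ℕ) (θ : ℤ) (v : ℕ → ℤ) (j : ℕ) (h2 : j + 1 ≤ n - 1) :
    qcoef n θ v j + qcoef n θ v (j+1) = v j - v (j+1) := by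
  unfold qcoef
  have hs : n - 1 - j = (n - 1 - (j+1)) + 1 := by omega
  rw [hs]
  set s := n - 1 - (j+1) with hsdef
  rw [my_sum_Icc_one, my_sum_Icc_one, Finset.sum_range_succ']
  have hc : ∀ l ∈ Finset.range s,
      (-1:ℤ) ^ (l+1+1) * (v (j + (l+1+1)) - θ)
      = -((-1:ℤ) ^ (l+1) * (v (j + 1 + (l+1)) - θ)) := by
    intro l _
    have hidx : j + (l+1+1) = j + 1 + (l+1) := by omega
    rw [hidx]; ring
  rw [Finset.sum_congr rfl hc, Finset.sum_neg_distrib]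
  set X := ∑ x ∈ Finset.range s, (-1:ℤ)^(x+1) * (v (j+1+(x+1)) - θ) with hX
  ring_nf

lemma my_qsum (n : ℕ) (hn : 2 ≤ n) (θ : ℤ) (v : ℕ → ℤ)
    (m : ℕ) (hm1 : 1 ≤ m) (hm2 : m ≤ n - 1) :
      qcoef n θ v (n - m) + 2 * ∑ l ∈ Finset.Icc 1 (m-1), qcoef n θ v (n - l)
        = v (n - m) - θ := by
  induction m, hm1 using Nat.le_induction with
  | base =>
      simp only [Nat.sub_self, show (1:ℕ)-1 = 0 from rfl]
      unfold qcoef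
      have h0 : n - 1 - (n - 1) = 0 := by omega
      rw [h0]
      simp
  | succ m hm ih =>
      have hml : m ≤ n - 1 := by omega
      have ih' := ih hml
      have hrec := my_qrec n θ v (n - (m+1)) (by omega)
      have he : n - (m+1) + 1 = n - m := by omega
      rw [he] at hrec
      have hsplit : ∑ l ∈ Finset.Icc 1 ((m+1)-1), qcoef n θ v (n - l)
          = ∑ l ∈ Finset.Icc 1 (m-1), qcoef n θ v (n - l) + qcoef n θ v (n - m) := by
        rw [show (m+1)-1 = (m-1)+1 by omega, Finset.sum_Icc_succ_top (by omega)]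
        rw [show (m-1)+1 = m by omega]
      rw [hsplit, show n - (m+1) = n - m - 1 by omega] at *
      linarith

/-- The telescoping identity in the proof of Lemma 5.6:
`(1 - 1/(4u²))^{θ - v i} · 𝔓_{n-i-1}(u) 𝔓_{n-i+1}(u) / (𝔓_{n-i}(u-½) 𝔓_{n-i}(u+½)) = 1`
whenever `2u ∉ ℤ`. -/
theorem stmt_10 (n : ℕ) (hn : 2 ≤ n) (θ : ℤ) (v : ℕ → ℤ)
    (i : ℕ) (hi1 : 1 ≤ i) (hi2 : i ≤ n - 1)
    (u : ℂ) (hu : ∀ k : ℤ, 2 * u ≠ (k : ℂ)) :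
    (1 - 1 / (4 * u ^ 2)) ^ (θ - v i) * frakP n θ v (n - i - 1) u * frakP n θ v (n - i + 1) u /
      (frakP n θ v (n - i) (u - 1 / 2) * frakP n θ v (n - i) (u + 1 / 2)) = 1 := by
  classical
  set m := n - i with hmdef
  have hm1 : 1 ≤ m := by omega
  have hm2 : m ≤ n - 1 := by omega
  have h0 : (2*u) ≠ 0 := by simpa using hu 0
  have hmo : 2*u - 1 ≠ 0 := by
    intro h; apply hu 1; push_cast; linear_combination h
  have hpo : 2*u + 1 ≠ 0 := by
    intro h; apply hu (-1); push_cast; linear_combination h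
  have hum : ∀ z : ℤ, 2*(u - 1/2) ≠ (z:ℂ) := by
    intro z h; apply hu (z+1); push_cast; linear_combination h
  have hup : ∀ z : ℤ, 2*(u + 1/2) ≠ (z:ℂ) := by
    intro z h; apply hu (z-1); push_cast; linear_combination h
  set A : ℂ := 1 - 1/(4*u^2) with hAdef
  have hA1 : (1 - (((1:ℕ):ℂ) / (2*u))^2) = A := by
    push_cast
    rw [hAdef, show (4:ℂ)*u^2 = (2*u)^2 by ring, div_pow, one_pow]
  have hA : A ≠ 0 := hA1 ▸ my_base_ne 1 u hu
  set Q : ℤ := ∑ l ∈ Finset.Icc 1 (m-1), qcoef n θ v (n - l) with hQdef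
  -- the key multiplicative identity
  have key : frakP n θ v m (u - 1/2) * frakP n θ v m (u + 1/2) * A ^ (qcoef n θ v i + 2*Q)
      = frakP n θ v (m-1) u * frakP n θ v (m+1) u := by
    have hAexp : A ^ (qcoef n θ v i + 2*Q)
        = (∏ l ∈ Finset.Icc 1 (m-1), (A^2) ^ (qcoef n θ v (n - l))) * A ^ (qcoef n θ v i) := by
      rw [zpow_add₀ hA, mul_comm]
      congr 1
      rw [show (2:ℤ)*Q = Q + Q by ring, zpow_add₀ hA, hQdef, my_zpow_sum hA,
        ← Finset.prod_mul_distrib]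
      exact Finset.prod_congr rfl fun l _ => by rw [sq, mul_zpow]
    calc frakP n θ v m (u - 1/2) * frakP n θ v m (u + 1/2) * A ^ (qcoef n θ v i + 2*Q)
        = (frakP n θ v m (u - 1/2) * frakP n θ v m (u + 1/2) *
            ∏ l ∈ Finset.Icc 1 (m-1), (A^2) ^ (qcoef n θ v (n - l))) * A ^ (qcoef n θ v i) := by
          rw [hAexp]; ring
      _ = (∏ l ∈ Finset.Icc 1 (m-1),
            ((1 - (((m - l : ℕ) : ℂ) / (2 * (u - 1/2))) ^ 2) *
             (1 - (((m - l : ℕ) : ℂ) / (2 * (u + 1/2))) ^ 2) * A^2) ^ (qcoef n θ v (n - l)))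
            * A ^ (qcoef n θ v i) := by
          rw [frakP, frakP, ← Finset.prod_mul_distrib, ← Finset.prod_mul_distrib]
          congr 1
          exact Finset.prod_congr rfl fun l _ => by rw [mul_zpow, mul_zpow]
      _ = (∏ l ∈ Finset.Icc 1 (m-1),
            ((1 - (((m - 1 - l : ℕ) : ℂ) / (2 * u)) ^ 2) *
             (1 - (((m + 1 - l : ℕ) : ℂ) / (2 * u)) ^ 2)) ^ (qcoef n θ v (n - l)))
            * A ^ (qcoef n θ v i) := by
          congr 1
          refine Finset.prod_congr rfl fun l hl => ?_
          simp only [Finset.mem_Icc] at hl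
          obtain ⟨k, hk⟩ : ∃ k, m - l = k + 1 := ⟨m - l - 1, by omega⟩
          rw [hk, show m - 1 - l = k from by omega, show m + 1 - l = k + 2 from by omega]
          rw [hAdef]
          rw [my_factor_id k u h0 hmo hpo]
      _ = (∏ l ∈ Finset.Icc 1 (m-1),
            (1 - (((m - 1 - l : ℕ) : ℂ) / (2 * u)) ^ 2) ^ (qcoef n θ v (n - l))) *
          ((∏ l ∈ Finset.Icc 1 (m-1),
            (1 - (((m + 1 - l : ℕ) : ℂ) / (2 * u)) ^ 2) ^ (qcoef n θ v (n - l)))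
            * A ^ (qcoef n θ v i)) := by
          rw [show (∏ l ∈ Finset.Icc 1 (m-1),
            ((1 - (((m - 1 - l : ℕ) : ℂ) / (2 * u)) ^ 2) *
             (1 - (((m + 1 - l : ℕ) : ℂ) / (2 * u)) ^ 2)) ^ (qcoef n θ v (n - l)))
            = ∏ l ∈ Finset.Icc 1 (m-1),
                ((1 - (((m - 1 - l : ℕ) : ℂ) / (2 * u)) ^ 2) ^ (qcoef n θ v (n - l)) *
                 (1 - (((m + 1 - l : ℕ) : ℂ) / (2 * u)) ^ 2) ^ (qcoef n θ v (n - l)))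
            from Finset.prod_congr rfl fun l _ => by rw [mul_zpow]]
          rw [Finset.prod_mul_distrib]
          ring
      _ = frakP n θ v (m-1) u * frakP n θ v (m+1) u := by
          congr 1
          · -- first product equals frakP (m-1)
            rw [frakP]
            by_cases h1 : m = 1
            · rw [h1]
            · rw [show m - 1 = (m - 1 - 1) + 1 from by omega,
                Finset.prod_Icc_succ_top (by omega)]
              rw [show m - 1 - 1 + 1 = m - 1 from by omega]
              rw [show m - 1 - (m - 1) = 0 from by omega]
              simp
          · -- second product with A-power equals frakP (m+1)
            rw [frakP, show m + 1 - 1 = (m - 1) + 1 from by omega,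
              Finset.prod_Icc_succ_top (by omega)]
            rw [show (m - 1) + 1 = m from by omega,
              show m + 1 - m = 1 from by omega,
              show n - m = i from by omega, hA1]
  -- final assembly
  have hq : qcoef n θ v i + 2*Q = v i - θ := by
    have h := my_qsum n hn θ v m hm1 hm2
    rw [show n - m = i from by omega] at h
    exact h
  rw [hq] at key
  have hDm : frakP n θ v m (u - 1/2) ≠ 0 := by
    rw [frakP]
    exact Finset.prod_ne_zero_iff.mpr fun l _ =>
      zpow_ne_zero _ (my_base_ne (m - l) (u - 1/2) hum)
  have hDp : frakP n θ v m (u + 1/2) ≠ 0 := by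
    rw [frakP]
    exact Finset.prod_ne_zero_iff.mpr fun l _ =>
      zpow_ne_zero _ (my_base_ne (m - l) (u + 1/2) hup)
  have hAA : A ^ (θ - v i) * A ^ (v i - θ) = 1 := by
    rw [← zpow_add₀ hA]
    simp
  calc A ^ (θ - v i) * frakP n θ v (m-1) u * frakP n θ v (m+1) u /
      (frakP n θ v m (u - 1/2) * frakP n θ v m (u + 1/2))
      = A ^ (θ - v i) * (frakP n θ v m (u - 1/2) * frakP n θ v m (u + 1/2) * A ^ (v i - θ)) /
        (frakP n θ v m (u - 1/2) * frakP n θ v m (u + 1/2)) := by rw [mul_assoc, key]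
    _ = (A ^ (θ - v i) * A ^ (v i - θ)) *
        ((frakP n θ v m (u - 1/2) * frakP n θ v m (u + 1/2)) /
         (frakP n θ v m (u - 1/2) * frakP n θ v m (u + 1/2))) := by ring
    _ = 1 := by rw [hAA, div_self (mul_ne_zero hDm hDp), one_mul]
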